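/- Let β_1,…,β_m be elements of a field of characteristic zero, let l_1,…,l_m be positive integers, L = l_1 + … + l_m, and define σ_0,…,σ_L by Π_{j=1}^m (β_j − w)^{l_j} = Σ_{i=0}^L σ_i w^i. Then for every j ∈ {1,…,m} and every k ∈ {0,1,…,l_j − 1}, one has Σ_{i=0}^L σ_i · i^k · β_j^i = 0. -/
import Mathlib


open Polynomial Finset

private lemma coeff_XD {F : Type*} [Field F] (p : F[X]) (i : ℕ) :
    (X * derivative p).coeff i = (i : F) * p.coeff i := by
  cases i with
  | zero => simp [coeff_zero_eq_eval_zero]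
  | succ n =>
      rw [coeff_X_mul, coeff_derivative]
      push_cast
      ring

private lemma aux_coeff {F : Type*} [Field F] (p : F[X]) (k i : ℕ) :
    ((fun q => X * derivative q)^[k] p).coeff i = (i : F) ^ k * p.coeff i := by
  induction k with
  | zero => simp
  | succ n ih =>
      rw [Function.iterate_succ_apply', coeff_XD, ih]
      ring

private lemma natDegree_XD_le {F : Type*} [Field F] (p : F[X]) :
    (X * derivative p).natDegree ≤ p.natDegree := by
  by_cases h : p.natDegree = 0
  · rw [Polynomial.eq_C_of_natDegree_eq_zero h]
    simp
  · calc (X * derivative p).natDegree ≤ X.natDegree + (derivative p).natDegree :=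
        natDegree_mul_le
    _ ≤ 1 + (p.natDegree - 1) := by
        gcongr
        · simp
        · exact natDegree_derivative_le p
    _ ≤ p.natDegree := by omega

private lemma aux_deg {F : Type*} [Field F] (p : F[X]) (k : ℕ) :
    ((fun q => X * derivative q)^[k] p).natDegree ≤ p.natDegree := by
  induction k with
  | zero => simp
  | succ n ih =>
      rw [Function.iterate_succ_apply']
      exact (natDegree_XD_le _).trans ih

private lemma dvd_XD {F : Type*} [Field F] (b : F) (n : ℕ) (p : F[X])
    (h : (C b - X) ^ (n + 1) ∣ p) : (C b - X) ^ n ∣ X * derivative p := by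
  obtain ⟨r, rfl⟩ := h
  refine ⟨X * (C ((n : F) + 1) * derivative (C b - X) * r + (C b - X) * derivative r), ?_⟩
  rw [derivative_mul, derivative_pow]
  simp only [Nat.add_sub_cancel]
  push_cast
  ring

private lemma aux_dvd {F : Type*} [Field F] (b : F) (p : F[X]) (n k : ℕ) (hk : k ≤ n)
    (h : (C b - X) ^ n ∣ p) :
    (C b - X) ^ (n - k) ∣ (fun q => X * derivative q)^[k] p := by
  induction k with
  | zero => simpa
  | succ t ih =>
      rw [Function.iterate_succ_apply']
      have ht : (C b - X) ^ ((n - (t + 1)) + 1) ∣ (fun q => X * derivative q)^[t] p := by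
        have : (n - (t + 1)) + 1 = n - t := by omega
        rw [this]
        exact ih (by omega)
      exact dvd_XD b _ _ ht

/-- Let `β₁,…,β_m` be elements of a field of characteristic zero,
`l₁,…,l_m` positive integers, `L = l₁ + … + l_m`, and define `σ₀,…,σ_L` by
`∏ j, (β j − w)^(l j) = ∑ i, σ i * w^i`.  Then for every `j` and every
`k ∈ {0,…,l j − 1}` one has `∑_{i=0}^{L} σ i * i^k * (β j)^i = 0`. -/
theorem sigma_power_sum_eq_zero {F : Type*} [Field F] [CharZero F]
    {m : ℕ} (β : Fin m → F) (l : Fin m → ℕ) (hl : ∀ j, 1 ≤ l j)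
    (L : ℕ) (hL : L = ∑ j, l j)
    (σ : ℕ → F)
    (hσ : ∀ i, σ i = (∏ j, (C (β j) - X) ^ (l j)).coeff i)
    (j : Fin m) (k : ℕ) (hk : k < l j) :
    ∑ i ∈ range (L + 1), σ i * (i : F) ^ k * (β j) ^ i = 0 := by
  set P : F[X] := ∏ j, (C (β j) - X) ^ (l j) with hP
  set Q : F[X] := (fun q => X * derivative q)^[k] P with hQ
  have hdeg1 : ∀ j : Fin m, (C (β j) - X).natDegree = 1 := by
    intro j
    rw [show C (β j) - X = -(X - C (β j)) by ring, natDegree_neg, natDegree_X_sub_C]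
  have hdegP : P.natDegree ≤ L := by
    rw [hL]
    refine (natDegree_prod_le _ _).trans (Finset.sum_le_sum fun i _ => ?_)
    exact natDegree_pow_le.trans (by rw [hdeg1 i, mul_one])
  have hdegQ : Q.natDegree < L + 1 := lt_of_le_of_lt ((aux_deg P k).trans hdegP) (by omega)
  have hsum : ∑ i ∈ range (L + 1), σ i * (i : F) ^ k * (β j) ^ i = Q.eval (β j) := by
    rw [eval_eq_sum_range' hdegQ]
    refine Finset.sum_congr rfl fun i _ => ?_
    rw [hσ, hQ, aux_coeff]
    ring
  have hdvdP : (C (β j) - X) ^ (l j) ∣ P := Finset.dvd_prod_of_mem _ (Finset.mem_univ j)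
  obtain ⟨r, hr⟩ := aux_dvd (β j) P (l j) k hk.le hdvdP
  have hev : Q.eval (β j) = 0 := by
    rw [hQ, hr, eval_mul, eval_pow, eval_sub, eval_C, eval_X, sub_self,
      zero_pow (by omega), zero_mul]
  rw [hsum, hev]
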